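/- Let H_1, …, H_n be symmetric PSD matrices with H_{ℓ} = A_ℓᵀ H_{ℓ+1} A_ℓ for matrices A_ℓ (ℓ = 1,…,n−1), and let vectors e_ℓ satisfy the recursion e_ℓ = A_{ℓ-1} e_{ℓ-1} + c_ℓ for ℓ = 2,…,n with e_1 = c_1. Then e_nᵀ H_n e_n ≤ ∑_{ℓ=1}^{n} 2^{n−ℓ+1} · c_ℓᵀ H_ℓ c_ℓ (in fact the ℓ = n term can be taken with coefficient 2). -/

import Mathlib

open Matrix

lemma psd_symm_dot {m : ℕ} (M : Matrix (Fin m) (Fin m) ℝ) (hM : M.PosSemidef)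
    (x y : Fin m → ℝ) : x ⬝ᵥ M.mulVec y = y ⬝ᵥ M.mulVec x := by
  have hsym : Mᵀ = M := by
    have := hM.1; simpa [Matrix.IsHermitian] using this
  rw [Matrix.dotProduct_mulVec, ← Matrix.mulVec_transpose, hsym, dotProduct_comm]

lemma psd_nonneg' {m : ℕ} (M : Matrix (Fin m) (Fin m) ℝ) (hM : M.PosSemidef)
    (x : Fin m → ℝ) : 0 ≤ x ⬝ᵥ M.mulVec x := by
  simpa using hM.dotProduct_mulVec_nonneg x

lemma psd_add_sq {m : ℕ} (M : Matrix (Fin m) (Fin m) ℝ) (hM : M.PosSemidef)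
    (x y : Fin m → ℝ) :
    (x + y) ⬝ᵥ M.mulVec (x + y) ≤ 2 * (x ⬝ᵥ M.mulVec x) + 2 * (y ⬝ᵥ M.mulVec y) := by
  have h0 : 0 ≤ (x - y) ⬝ᵥ M.mulVec (x - y) := psd_nonneg' M hM _
  have hxy := psd_symm_dot M hM x y
  simp only [Matrix.mulVec_add, Matrix.mulVec_sub, dotProduct_add,
    dotProduct_sub, add_dotProduct, sub_dotProduct] at *
  linarith

/-- Theorem 1: the final conversion error in the Hessian quadratic form is bounded by
a weighted sum of local conversion errors,
`eₙᵀ Hₙ eₙ ≤ ∑_{ℓ=1}^n 2^{n-ℓ+1} cₗᵀ Hₗ cₗ`. -/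
theorem conversion_error_bound
    (n : ℕ) (hn : 1 ≤ n) (d : ℕ → ℕ)
    (H : (ℓ : ℕ) → Matrix (Fin (d ℓ)) (Fin (d ℓ)) ℝ)
    (A : (ℓ : ℕ) → Matrix (Fin (d (ℓ + 1))) (Fin (d ℓ)) ℝ)
    (e c : (ℓ : ℕ) → Fin (d ℓ) → ℝ)
    (hPSD : ∀ ℓ, (H ℓ).PosSemidef)
    (hH : ∀ ℓ, 1 ≤ ℓ → ℓ + 1 ≤ n → H ℓ = (A ℓ)ᵀ * H (ℓ + 1) * A ℓ)
    (he1 : e 1 = c 1)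
    (hrec : ∀ ℓ, 1 ≤ ℓ → ℓ + 1 ≤ n →
      e (ℓ + 1) = (A ℓ).mulVec (e ℓ) + c (ℓ + 1)) :
    e n ⬝ᵥ (H n).mulVec (e n)
      ≤ ∑ ℓ ∈ Finset.Icc 1 n,
          (2 : ℝ) ^ (n - ℓ + 1) * (c ℓ ⬝ᵥ (H ℓ).mulVec (c ℓ)) := by
  have main : ∀ m, 1 ≤ m → m ≤ n →
      e m ⬝ᵥ (H m).mulVec (e m)
        ≤ ∑ ℓ ∈ Finset.Icc 1 m,
            (2 : ℝ) ^ (m - ℓ + 1) * (c ℓ ⬝ᵥ (H ℓ).mulVec (c ℓ)) := by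
    intro m hm
    induction m, hm using Nat.le_induction with
    | base =>
      intro _
      rw [he1]
      simp only [Finset.Icc_self, Finset.sum_singleton]
      have h0 := psd_nonneg' _ (hPSD 1) (c 1)
      norm_num
      linarith
    | succ m hm ih =>
      intro hmn
      have hrec' := hrec m hm (by omega)
      have hH' := hH m hm (by omega)
      have hstep : e (m + 1) ⬝ᵥ (H (m + 1)).mulVec (e (m + 1))
          ≤ 2 * (e m ⬝ᵥ (H m).mulVec (e m))
            + 2 * (c (m + 1) ⬝ᵥ (H (m + 1)).mulVec (c (m + 1))) := by
        rw [hrec']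
        have := psd_add_sq _ (hPSD (m + 1)) ((A m).mulVec (e m)) (c (m + 1))
        have heq : (A m).mulVec (e m) ⬝ᵥ (H (m + 1)).mulVec ((A m).mulVec (e m))
            = e m ⬝ᵥ (H m).mulVec (e m) := by
          rw [hH']
          rw [← Matrix.mulVec_mulVec, ← Matrix.mulVec_mulVec,
            Matrix.dotProduct_mulVec (e m), Matrix.vecMul_transpose]
        rw [heq] at this
        exact this
      have hsum : ∑ ℓ ∈ Finset.Icc 1 (m + 1),
            (2 : ℝ) ^ (m + 1 - ℓ + 1) * (c ℓ ⬝ᵥ (H ℓ).mulVec (c ℓ))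
          = 2 * ∑ ℓ ∈ Finset.Icc 1 m,
              (2 : ℝ) ^ (m - ℓ + 1) * (c ℓ ⬝ᵥ (H ℓ).mulVec (c ℓ))
            + 2 * (c (m + 1) ⬝ᵥ (H (m + 1)).mulVec (c (m + 1))) := by
        rw [Finset.sum_Icc_succ_top (by omega : 1 ≤ m + 1)]
        have : m + 1 - (m + 1) + 1 = 1 := by omega
        rw [this, Finset.mul_sum]
        congr 1
        · apply Finset.sum_congr rfl
          intro ℓ hℓ
          have hℓm : ℓ ≤ m := (Finset.mem_Icc.mp hℓ).2
          have : m + 1 - ℓ + 1 = (m - ℓ + 1) + 1 := by omega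
          rw [this, pow_succ]
          ring
        · ring
      rw [hsum]
      have h2 : 2 * (e m ⬝ᵥ (H m).mulVec (e m))
          ≤ 2 * ∑ ℓ ∈ Finset.Icc 1 m,
              (2 : ℝ) ^ (m - ℓ + 1) * (c ℓ ⬝ᵥ (H ℓ).mulVec (c ℓ)) := by
        linarith [ih (by omega)]
      linarith
  exact main n hn le_rfl
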